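/- Let r ≥ 1 and f, g ∈ M_r(ℂ)[Z] be matrix polynomials. Define P_f(x, y₁) = det(y₁ I − f(xI)) ∈ ℂ[x, y₁], P_g(x, y₂) = det(y₂ I − g(xI)) ∈ ℂ[x, y₂], and R_{f,g}(y₁, y₂) = Res_x(P_f(x, y₁), P_g(x, y₂)) ∈ ℂ[y₁, y₂], the resultant with respect to x. If every eigenvalue of f(xI) and every eigenvalue of g(xI), as elements of an algebraic closure of ℂ(x), are multiplicatively independent, then R_{f,g}(y₁, y₂) has no factor of the form y₁^i y₂^j − ρ or y₁^i − ρ y₂^j for nonnegative integers i, j not both zero and a root of unity ρ. -/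

import Mathlib

open Polynomial Matrix

/-- The Sylvester matrix of two polynomials `p, q` over a commutative ring: an
`(n + m) × (n + m)` matrix, where `m = deg p` and `n = deg q`, whose first `n` rows are
the shifted coefficient sequences of `p` and whose last `m` rows are the shifted
coefficient sequences of `q`. -/
noncomputable def sylvester {R : Type*} [CommRing R] (p q : Polynomial R) :
    Matrix (Fin (q.natDegree + p.natDegree)) (Fin (q.natDegree + p.natDegree)) R :=
  Matrix.of fun i j =>
    if (i : ℕ) < q.natDegree then
      (if (j : ℕ) ≤ (i : ℕ) + p.natDegree then p.coeff (p.natDegree + i - j) else 0)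
    else
      (if (j : ℕ) ≤ ((i : ℕ) - q.natDegree) + q.natDegree then
        q.coeff (q.natDegree + ((i : ℕ) - q.natDegree) - j) else 0)

/-- The resultant of two polynomials: the determinant of their Sylvester matrix. -/
noncomputable def resultant {R : Type*} [CommRing R] (p q : Polynomial R) : R :=
  (_root_.sylvester p q).det

/-- `P_f(x, y₁) = det(y₁ I − f(xI))`, regarded as a polynomial in `x` whose coefficients
are polynomials in the variables `y₁ = X 0`, `y₂ = X 1`. -/
noncomputable def Pmat {r : ℕ} (f : Polynomial (Matrix (Fin r) (Fin r) ℂ)) (v : Fin 2) :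
    Polynomial (MvPolynomial (Fin 2) ℂ) :=
  (Polynomial.C (MvPolynomial.X v : MvPolynomial (Fin 2) ℂ) •
      (1 : Matrix (Fin r) (Fin r) (Polynomial (MvPolynomial (Fin 2) ℂ))) -
    (matPolyEquiv.symm f).map (Polynomial.map (MvPolynomial.C))).det

/-- `R_{f,g}(y₁, y₂) = Res_x(P_f(x, y₁), P_g(x, y₂)) ∈ ℂ[y₁, y₂]`. -/
noncomputable def Rres {r : ℕ} (f g : Polynomial (Matrix (Fin r) (Fin r) ℂ)) :
    MvPolynomial (Fin 2) ℂ :=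
  _root_.resultant (Pmat f 0) (Pmat g 1)

/-- `T_{f,g}(y₁, y₂) = Res_x(P_f(x, y₁), y₂ − det(g(xI))) ∈ ℂ[y₁, y₂]`. -/
noncomputable def Tres {r : ℕ} (f g : Polynomial (Matrix (Fin r) (Fin r) ℂ)) :
    MvPolynomial (Fin 2) ℂ :=
  _root_.resultant (Pmat f 0)
    (Polynomial.C (MvPolynomial.X 1 : MvPolynomial (Fin 2) ℂ) -
      ((matPolyEquiv.symm g).det).map (MvPolynomial.C))

/-- The natural map from `ℂ[x]` into an algebraic closure of `ℂ(x)`. -/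
noncomputable def toClosure : Polynomial ℂ →+* AlgebraicClosure (RatFunc ℂ) :=
  (algebraMap (RatFunc ℂ) (AlgebraicClosure (RatFunc ℂ))).comp
    (algebraMap (Polynomial ℂ) (RatFunc ℂ))

/-! ### Auxiliary material -/

private lemma degree_mul_lt_aux {K : Type*} [Field K] {A p : Polynomial K} {n m : ℕ}
    (hA : A.degree < (n : WithBot ℕ)) (hp : p.degree ≤ (m : WithBot ℕ)) :
    (A * p).degree < ((n + m : ℕ) : WithBot ℕ) := by
  rcases eq_or_ne A 0 with rfl | hA0
  · rw [zero_mul, degree_zero]; exact WithBot.bot_lt_coe _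
  rcases eq_or_ne p 0 with rfl | hp0
  · rw [mul_zero, degree_zero]; exact WithBot.bot_lt_coe _
  rw [degree_mul, degree_eq_natDegree hA0, degree_eq_natDegree hp0] at *
  rw [← Nat.cast_add, Nat.cast_lt]
  have h1 : A.natDegree < n := by exact_mod_cast hA
  have h2 : p.natDegree ≤ m := by exact_mod_cast hp
  omega

private lemma key1 {R K : Type*} [CommRing R] [Field K] (ψ : R →+* K) (P Q : Polynomial R)
    (h : ((_root_.sylvester P Q).map ψ).det = 0) :
    ∃ A B : Polynomial K, (A ≠ 0 ∨ B ≠ 0) ∧ A.degree < (Q.natDegree : WithBot ℕ) ∧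
      B.degree < (P.natDegree : WithBot ℕ) ∧ A * (P.map ψ) + B * (Q.map ψ) = 0 := by
  classical
  set m := P.natDegree with hm
  set n := Q.natDegree with hn
  set p' : Polynomial K := P.map ψ with hp'
  set q' : Polynomial K := Q.map ψ with hq'
  set M : Matrix (Fin (n + m)) (Fin (n + m)) K := (_root_.sylvester P Q).map ψ with hM
  obtain ⟨v, hv, hvM⟩ := Matrix.exists_vecMul_eq_zero_iff.mpr h
  set A : Polynomial K :=
    ∑ i : Fin (n + m), if (i : ℕ) < n then C (v i) * X ^ (n - 1 - (i : ℕ)) else 0 with hA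
  set B : Polynomial K :=
    ∑ i : Fin (n + m), if (i : ℕ) < n then 0 else C (v i) * X ^ (m - 1 - ((i : ℕ) - n)) with hB
  have hdegA : A.degree < (n : WithBot ℕ) := by
    refine lt_of_le_of_lt (degree_sum_le _ _) ?_
    rw [Finset.sup_lt_iff (by exact WithBot.bot_lt_coe n)]
    intro i _
    by_cases hi : (i : ℕ) < n
    · simp only [hi, if_true]
      refine lt_of_le_of_lt (degree_C_mul_X_pow_le _ _) ?_
      exact_mod_cast (by omega : n - 1 - (i : ℕ) < n)
    · simp only [hi, if_false, degree_zero]; exact WithBot.bot_lt_coe _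
  have hdegB : B.degree < (m : WithBot ℕ) := by
    refine lt_of_le_of_lt (degree_sum_le _ _) ?_
    rw [Finset.sup_lt_iff (by exact WithBot.bot_lt_coe m)]
    intro i _
    by_cases hi : (i : ℕ) < n
    · simp only [hi, if_true, degree_zero]; exact WithBot.bot_lt_coe _
    · simp only [hi, if_false]
      refine lt_of_le_of_lt (degree_C_mul_X_pow_le _ _) ?_
      have : (i : ℕ) < n + m := i.isLt
      exact_mod_cast (by omega : m - 1 - ((i : ℕ) - n) < m)
  have hdp' : p'.degree ≤ (m : WithBot ℕ) :=
    le_trans (degree_map_le) (degree_le_natDegree)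
  have hdq' : q'.degree ≤ (n : WithBot ℕ) :=
    le_trans (degree_map_le) (degree_le_natDegree)
  refine ⟨A, B, ?_, hdegA, hdegB, ?_⟩
  · obtain ⟨i₀, hi₀⟩ : ∃ i, v i ≠ 0 := by
      by_contra hc
      push_neg at hc
      exact hv (funext hc)
    by_cases hi : (i₀ : ℕ) < n
    · left
      intro hA0
      apply hi₀
      have := congrArg (fun P => Polynomial.coeff P (n - 1 - (i₀ : ℕ))) hA0
      simp only [hA, finset_sum_coeff, coeff_zero] at this
      rw [Finset.sum_eq_single i₀] at this
      · simpa [hi, coeff_X_pow] using this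
      · intro b _ hb
        by_cases hbn : (b : ℕ) < n
        · simp only [hbn, if_true, coeff_C_mul, coeff_X_pow]
          have hne : (b : ℕ) ≠ (i₀ : ℕ) := fun hc => hb (Fin.ext hc)
          rw [if_neg (by omega), mul_zero]
        · simp [hbn]
      · intro hmem
        exact absurd (Finset.mem_univ i₀) hmem
    · right
      intro hB0
      apply hi₀
      have := congrArg (fun P => Polynomial.coeff P (m - 1 - ((i₀ : ℕ) - n))) hB0
      simp only [hB, finset_sum_coeff, coeff_zero] at this
      rw [Finset.sum_eq_single i₀] at this
      · simpa [hi, coeff_X_pow] using this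
      · intro b _ hb
        by_cases hbn : (b : ℕ) < n
        · simp [hbn]
        · simp only [hbn, if_false, coeff_C_mul, coeff_X_pow]
          have hb' : (b : ℕ) < n + m := b.isLt
          have hi₀' : (i₀ : ℕ) < n + m := i₀.isLt
          have hne : (b : ℕ) ≠ (i₀ : ℕ) := fun hc => hb (Fin.ext hc)
          rw [if_neg (by omega), mul_zero]
      · intro hmem
        exact absurd (Finset.mem_univ i₀) hmem
  · ext k
    simp only [coeff_zero]
    by_cases hk : k < n + m
    · set j : Fin (n + m) := ⟨n + m - 1 - k, by omega⟩ with hj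
      have hvj : ∑ i, v i * M i j = 0 := by
        have := congrFun hvM j
        simpa [Matrix.vecMul, dotProduct] using this
      rw [coeff_add]
      rw [hA, hB, Finset.sum_mul, Finset.sum_mul, finset_sum_coeff, finset_sum_coeff,
        ← Finset.sum_add_distrib]
      rw [← hvj]
      refine Finset.sum_congr rfl ?_
      intro i _
      have hilt : (i : ℕ) < n + m := i.isLt
      have hMij : M i j = if (i : ℕ) < n then
          (if (j : ℕ) ≤ (i : ℕ) + m then p'.coeff (m + i - j) else 0)
        else
          (if (j : ℕ) ≤ ((i : ℕ) - n) + n then q'.coeff (n + ((i : ℕ) - n) - j) else 0) := by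
        simp only [hM, Matrix.map_apply, _root_.sylvester, Matrix.of_apply]
        split
        · split
          · rw [coeff_map]
          · exact map_zero ψ
        · split
          · rw [coeff_map]
          · exact map_zero ψ
      by_cases hi : (i : ℕ) < n
      · simp only [hi, if_true, hMij, zero_mul, coeff_zero, add_zero]
        have hre : C (v i) * X ^ (n - 1 - (i : ℕ)) * p' =
            C (v i) * (p' * X ^ (n - 1 - (i : ℕ))) := by ring
        rw [hre, coeff_C_mul, coeff_mul_X_pow']
        have hjcoe : (j : ℕ) = n + m - 1 - k := rfl
        by_cases hc : n - 1 - (i : ℕ) ≤ k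
        · have hc2 : (j : ℕ) ≤ (i : ℕ) + m := by rw [hjcoe]; omega
          have harg : k - (n - 1 - (i : ℕ)) = m + (i : ℕ) - (j : ℕ) := by rw [hjcoe]; omega
          rw [if_pos hc, if_pos hc2, harg]
        · have hc2 : ¬ ((j : ℕ) ≤ (i : ℕ) + m) := by rw [hjcoe]; omega
          rw [if_neg hc, if_neg hc2, mul_zero]
      · simp only [hi, if_false, hMij, zero_mul, coeff_zero, zero_add]
        have hre : C (v i) * X ^ (m - 1 - ((i : ℕ) - n)) * q' =
            C (v i) * (q' * X ^ (m - 1 - ((i : ℕ) - n))) := by ring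
        rw [hre, coeff_C_mul, coeff_mul_X_pow']
        have hjcoe : (j : ℕ) = n + m - 1 - k := rfl
        by_cases hc : m - 1 - ((i : ℕ) - n) ≤ k
        · have hc2 : (j : ℕ) ≤ ((i : ℕ) - n) + n := by rw [hjcoe]; omega
          have harg : k - (m - 1 - ((i : ℕ) - n)) = n + ((i : ℕ) - n) - (j : ℕ) := by
            rw [hjcoe]; omega
          rw [if_pos hc, if_pos hc2, harg]
        · have hc2 : ¬ ((j : ℕ) ≤ ((i : ℕ) - n) + n) := by rw [hjcoe]; omega
          rw [if_neg hc, if_neg hc2, mul_zero]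
    · have h1 : (A * p').degree < ((n + m : ℕ) : WithBot ℕ) := degree_mul_lt_aux hdegA hdp'
      have h2 : (B * q').degree < ((m + n : ℕ) : WithBot ℕ) := degree_mul_lt_aux hdegB hdq'
      have h2' : (B * q').degree < ((n + m : ℕ) : WithBot ℕ) := by rwa [Nat.add_comm m n] at h2
      have : (A * p' + B * q').degree < ((n + m : ℕ) : WithBot ℕ) :=
        lt_of_le_of_lt (degree_add_le _ _) (max_lt h1 h2')
      refine coeff_eq_zero_of_degree_lt (lt_of_lt_of_le this ?_)
      exact_mod_cast Nat.le_of_not_lt hk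

private lemma key2 {K : Type*} [Field K] [IsAlgClosed K] {p q A B : Polynomial K}
    (hAB : A * p + B * q = 0) (hA : A.degree < q.degree) (hnz : A ≠ 0 ∨ B ≠ 0)
    (hp : p ≠ 0) : ∃ x₀, p.eval x₀ = 0 ∧ q.eval x₀ = 0 := by
  classical
  have hq : q ≠ 0 := by
    rintro rfl
    rw [degree_zero] at hA
    exact (not_lt_bot hA)
  have hA0 : A ≠ 0 := by
    rintro rfl
    rw [zero_mul, zero_add] at hAB
    rcases mul_eq_zero.mp hAB with hB | h0
    · exact hnz.elim (fun h => h rfl) (fun h => h hB)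
    · exact hq h0
  by_cases hcop : IsCoprime p q
  · exfalso
    have hdvd : q ∣ A * p := ⟨-B, by rw [eq_neg_of_add_eq_zero_left hAB]; ring⟩
    have hqA : q ∣ A := (hcop.symm).dvd_of_dvd_mul_right hdvd
    exact absurd hA (not_lt.mpr (Polynomial.degree_le_of_dvd hqA hA0))
  · set d := EuclideanDomain.gcd p q with hd
    have hdp : d ∣ p := EuclideanDomain.gcd_dvd_left _ _
    have hdq : d ∣ q := EuclideanDomain.gcd_dvd_right _ _
    have hdu : ¬ IsUnit d := fun hu => hcop (EuclideanDomain.gcd_isUnit_iff.mp hu)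
    have hddeg : d.degree ≠ 0 := fun h0 => hdu (Polynomial.isUnit_iff_degree_eq_zero.mpr h0)
    obtain ⟨x₀, hx₀⟩ := IsAlgClosed.exists_root d hddeg
    exact ⟨x₀, Polynomial.eval_eq_zero_of_dvd_of_eval_eq_zero hdp hx₀,
      Polynomial.eval_eq_zero_of_dvd_of_eval_eq_zero hdq hx₀⟩

private lemma root_transport {K : Type*} [Field K] [IsAlgClosed K] (Φ : K →+* K)
    (χ : Polynomial K) (hχ : χ ≠ 0) {z : K} (hz : (χ.map Φ).eval z = 0) :
    ∃ w, χ.eval w = 0 ∧ Φ w = z := by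
  have hsp : χ.Splits := IsAlgClosed.splits χ
  have hrep := hsp.eq_prod_roots
  have : (χ.map Φ).eval z =
      Φ χ.leadingCoeff * ((χ.roots.map fun a => z - Φ a)).prod := by
    conv_lhs => rw [hrep]
    rw [Polynomial.map_mul, Polynomial.map_multiset_prod, Polynomial.eval_mul, map_C, eval_C]
    congr 1
    rw [Multiset.map_map, Polynomial.eval_multiset_prod, Multiset.map_map]
    exact congrArg Multiset.prod (Multiset.map_congr rfl (fun a _ => by simp))
  rw [this] at hz
  rcases mul_eq_zero.mp hz with h0 | h0
  · exact absurd h0 (by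
      simpa using (map_ne_zero_of_mem_nonZeroDivisors Φ (RingHom.injective Φ)
        (mem_nonZeroDivisors_of_ne_zero (Polynomial.leadingCoeff_ne_zero.mpr hχ))))
  · obtain ⟨y, hy, hy0⟩ := Multiset.mem_map.mp ((Multiset.prod_eq_zero_iff).mp h0)
    exact ⟨y, (Polynomial.isRoot_of_mem_roots hy), (sub_eq_zero.mp hy0).symm⟩

private lemma isIntegral_of_monic_coeff_mem {k K : Type*} [Field k] [Field K] [Algebra k K]
    (S : Subalgebra k K) (h : Polynomial K) (hm : h.Monic) (hc : ∀ s, h.coeff s ∈ S)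
    {z : K} (hz : h.eval z = 0) : IsIntegral S z := by
  classical
  set P : Polynomial S :=
    ∑ s ∈ Finset.range (h.natDegree + 1), Polynomial.monomial s (⟨h.coeff s, hc s⟩ : S) with hP
  have hmap : P.map (algebraMap S K) = h := by
    rw [hP, Polynomial.map_sum]
    conv_rhs => rw [h.as_sum_range' (h.natDegree + 1) (Nat.lt_succ_self _)]
    refine Finset.sum_congr rfl fun s _ => ?_
    rw [Polynomial.map_monomial]
    rfl
  refine ⟨P, ?_, ?_⟩
  · have hinj : Function.Injective (algebraMap S K) := Subtype.val_injective
    exact Polynomial.monic_of_injective hinj (by rwa [hmap])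
  · rw [← Polynomial.eval_map, hmap]
    exact hz

/-- substitute the outer variable `Y ↦ z` and the inner constants via `h`. -/
private noncomputable def theta {S : Type*} [CommRing S] (h : ℂ →+* S) (z : S) :
    Polynomial (Polynomial ℂ) →+* Polynomial S :=
  Polynomial.eval₂RingHom (Polynomial.mapRingHom h) (Polynomial.C z)

/-- the `ℂ[Y]`-polynomial recording the `k`-th inner coefficients -/
private noncomputable def rowPoly (χ : Polynomial (Polynomial ℂ)) (k : ℕ) : Polynomial ℂ :=
  χ.sum fun s cs => Polynomial.C (cs.coeff k) * Polynomial.X ^ s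

private lemma rowPoly_coeff (χ : Polynomial (Polynomial ℂ)) (k s : ℕ) :
    (rowPoly χ k).coeff s = (χ.coeff s).coeff k := by
  classical
  rw [rowPoly, Polynomial.sum, finset_sum_coeff]
  rw [Finset.sum_eq_single s]
  · simp [coeff_X_pow]
  · intro b _ hb
    rw [coeff_C_mul, coeff_X_pow, if_neg (by omega), mul_zero]
  · intro hs
    simp [Polynomial.notMem_support_iff.mp hs]

private lemma theta_coeff {S : Type*} [CommRing S] (h : ℂ →+* S) (z : S)
    (χ : Polynomial (Polynomial ℂ)) (k : ℕ) :
    (theta h z χ).coeff k = Polynomial.eval₂ h z (rowPoly χ k) := by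
  classical
  rw [theta, coe_eval₂RingHom, Polynomial.eval₂_eq_sum, Polynomial.sum, finset_sum_coeff,
    rowPoly, Polynomial.sum, Polynomial.eval₂_finset_sum]
  refine Finset.sum_congr rfl fun s _ => ?_
  rw [Polynomial.eval₂_mul, Polynomial.eval₂_C, Polynomial.eval₂_X_pow, ← Polynomial.C_pow,
    Polynomial.coeff_mul_C, Polynomial.coe_mapRingHom, Polynomial.coeff_map]

private lemma theta_eval {S : Type*} [CommRing S] (h : ℂ →+* S) (z x₀ : S)
    (χ : Polynomial (Polynomial ℂ)) :
    (theta h z χ).eval x₀ = ((χ.map (Polynomial.eval₂RingHom h x₀)).eval z) := by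
  have key : (Polynomial.evalRingHom x₀).comp (theta h z) =
      (Polynomial.evalRingHom z).comp (Polynomial.mapRingHom (Polynomial.eval₂RingHom h x₀)) := by
    apply Polynomial.ringHom_ext'
    · apply Polynomial.ringHom_ext'
      · ext c
        simp [theta]
      · simp [theta]
    · simp [theta]
  have := congrArg (fun F => F χ) key
  simpa using this

private lemma map_theta {S T : Type*} [CommRing S] [CommRing T] (h : ℂ →+* S) (z : S)
    (ψ : S →+* T) (χ : Polynomial (Polynomial ℂ)) :
    (theta h z χ).map ψ = theta (ψ.comp h) (ψ z) χ := by
  have key : (Polynomial.mapRingHom ψ).comp (theta h z) = theta (ψ.comp h) (ψ z) := by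
    apply Polynomial.ringHom_ext'
    · apply Polynomial.ringHom_ext'
      · ext c
        simp [theta]
      · simp [theta]
    · simp [theta]
  have := congrArg (fun F => F χ) key
  simpa using this

private lemma det_smul_one_sub {K : Type*} [CommRing K] {r : ℕ}
    (N : Matrix (Fin r) (Fin r) K) (μ : K) :
    (μ • (1 : Matrix (Fin r) (Fin r) K) - N).det = N.charpoly.eval μ := by
  rw [Matrix.charpoly, ← Polynomial.coe_evalRingHom, RingHom.map_det]
  congr 1
  ext i j
  by_cases hij : i = j
  · subst hij
    simp [Matrix.charmatrix_apply_eq, Matrix.one_apply]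
  · simp [Matrix.charmatrix_apply_ne _ _ _ hij, Matrix.one_apply, hij]

private abbrev LL : Type := AlgebraicClosure (RatFunc ℂ)

/-- evaluation of `ℂ[x]` at a point of `LL` -/
private noncomputable def phix (x₀ : LL) : Polynomial ℂ →+* LL :=
  Polynomial.eval₂RingHom (algebraMap ℂ LL) x₀

/-- the specialization `y₁ ↦ α`, `y₂ ↦ β` -/
private noncomputable def psiab (α β : LL) : MvPolynomial (Fin 2) ℂ →+* LL :=
  (MvPolynomial.aeval ![α, β] : MvPolynomial (Fin 2) ℂ →ₐ[ℂ] LL).toRingHom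

/-- the characteristic polynomial of `f`, an element of `(ℂ[x])[Y]` -/
private noncomputable def chp {r : ℕ} (f : Polynomial (Matrix (Fin r) (Fin r) ℂ)) :
    Polynomial (Polynomial ℂ) :=
  (matPolyEquiv.symm f).charpoly

private lemma cmap_eq (c : ℂ) : algebraMap ℂ LL c = toClosure (Polynomial.C c) := by
  have h1 : algebraMap ℂ LL c = algebraMap (RatFunc ℂ) LL (algebraMap ℂ (RatFunc ℂ) c) :=
    IsScalarTower.algebraMap_apply ℂ (RatFunc ℂ) LL c
  have h2 : algebraMap ℂ (RatFunc ℂ) c =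
      algebraMap (Polynomial ℂ) (RatFunc ℂ) (Polynomial.C c) := by
    rw [IsScalarTower.algebraMap_apply ℂ (Polynomial ℂ) (RatFunc ℂ), Polynomial.algebraMap_eq]
  rw [h1, h2]
  rfl

private lemma toClosure_injective : Function.Injective toClosure := by
  intro a b h
  exact IsFractionRing.injective (Polynomial ℂ) (RatFunc ℂ)
    ((algebraMap (RatFunc ℂ) LL).injective h)

private lemma phix_tval : phix (toClosure Polynomial.X) = toClosure := by
  apply Polynomial.ringHom_ext'
  · ext c
    simp only [phix, RingHom.comp_apply, coe_eval₂RingHom, Polynomial.eval₂_C]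
    exact cmap_eq c
  · simp [phix]

private lemma aeval_tval (p : Polynomial ℂ) :
    Polynomial.aeval (toClosure Polynomial.X) p = toClosure p := by
  have : Polynomial.aeval (toClosure Polynomial.X) p = phix (toClosure Polynomial.X) p := rfl
  rw [this, phix_tval]

private lemma transcendental_tval : Transcendental ℂ (toClosure Polynomial.X) := by
  rintro ⟨p, hp0, hp⟩
  rw [aeval_tval] at hp
  exact hp0 (toClosure_injective (by rwa [map_zero]))

private lemma tval_ne_zero : toClosure Polynomial.X ≠ 0 := by
  intro h
  apply transcendental_tval
  rw [h]
  exact isAlgebraic_zero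

/-- `Pmat` is the image of the characteristic polynomial under `theta`. -/
private lemma Pmat_eq {r : ℕ} (f : Polynomial (Matrix (Fin r) (Fin r) ℂ)) (v : Fin 2) :
    Pmat f v = theta MvPolynomial.C (MvPolynomial.X v) (chp f) := by
  rw [Pmat, chp, Matrix.charpoly, RingHom.map_det]
  refine congrArg Matrix.det (Matrix.ext fun i j => ?_)
  rw [RingHom.mapMatrix_apply, Matrix.map_apply]
  by_cases hij : i = j
  · subst hij
    rw [Matrix.charmatrix_apply_eq]
    simp [theta, Matrix.one_apply, Matrix.smul_apply, Matrix.sub_apply, Matrix.map_apply]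
  · rw [Matrix.charmatrix_apply_ne _ _ _ hij]
    simp [theta, Matrix.one_apply, hij, Matrix.smul_apply, Matrix.sub_apply, Matrix.map_apply]

private lemma psiab_comp_C (α β : LL) :
    (psiab α β).comp (MvPolynomial.C : ℂ →+* MvPolynomial (Fin 2) ℂ) = algebraMap ℂ LL := by
  ext c
  simp [psiab]

private lemma psiab_X (α β : LL) (v : Fin 2) : psiab α β (MvPolynomial.X v) = ![α, β] v := by
  simp [psiab]

private lemma Pmat_map {r : ℕ} (f : Polynomial (Matrix (Fin r) (Fin r) ℂ)) (v : Fin 2)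
    (α β : LL) :
    (Pmat f v).map (psiab α β) = theta (algebraMap ℂ LL) (![α, β] v) (chp f) := by
  rw [Pmat_eq, map_theta, psiab_comp_C, psiab_X]

private lemma chp_monic {r : ℕ} (f : Polynomial (Matrix (Fin r) (Fin r) ℂ)) :
    (chp f).Monic := Matrix.charpoly_monic _

private lemma chp_natDegree {r : ℕ} (f : Polynomial (Matrix (Fin r) (Fin r) ℂ)) :
    (chp f).natDegree = r := by
  rw [chp, Matrix.charpoly_natDegree_eq_dim, Fintype.card_fin]

private lemma rowPoly_chp_zero_ne {r : ℕ} (hr : 1 ≤ r)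
    (f : Polynomial (Matrix (Fin r) (Fin r) ℂ)) : rowPoly (chp f) 0 ≠ 0 := by
  intro h0
  have := rowPoly_coeff (chp f) 0 r
  rw [h0, coeff_zero] at this
  have hlc : (chp f).coeff r = 1 := by
    have := (chp_monic f).coeff_natDegree
    rwa [chp_natDegree f] at this
  rw [hlc] at this
  simp at this

private lemma iota_inj (v : Fin 2) :
    Function.Injective fun h : Polynomial ℂ =>
      Polynomial.eval₂ (MvPolynomial.C : ℂ →+* MvPolynomial (Fin 2) ℂ) (MvPolynomial.X v) h := by
  intro a b hab
  let π : MvPolynomial (Fin 2) ℂ →+* Polynomial ℂ :=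
    (MvPolynomial.aeval (fun _ => Polynomial.X) : MvPolynomial (Fin 2) ℂ →ₐ[ℂ] Polynomial ℂ).toRingHom
  have happ : ∀ h : Polynomial ℂ,
      π (Polynomial.eval₂ (MvPolynomial.C : ℂ →+* MvPolynomial (Fin 2) ℂ) (MvPolynomial.X v) h)
        = h := by
    intro h
    rw [Polynomial.hom_eval₂]
    have h1 : π.comp (MvPolynomial.C : ℂ →+* MvPolynomial (Fin 2) ℂ) = Polynomial.C :=
      RingHom.ext fun c => by simp [π]
    have h2 : π (MvPolynomial.X v) = Polynomial.X := by simp [π]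
    rw [h1, h2, Polynomial.eval₂_C_X]
  calc a = π _ := (happ a).symm
  _ = π _ := congrArg π hab
  _ = b := happ b

private lemma Pmat_coeff {r : ℕ} (f : Polynomial (Matrix (Fin r) (Fin r) ℂ)) (v : Fin 2)
    (k : ℕ) : (Pmat f v).coeff k =
      Polynomial.eval₂ (MvPolynomial.C : ℂ →+* MvPolynomial (Fin 2) ℂ) (MvPolynomial.X v)
        (rowPoly (chp f) k) := by
  rw [Pmat_eq, theta_coeff]

private lemma Pmat_ne_zero {r : ℕ} (hr : 1 ≤ r) (f : Polynomial (Matrix (Fin r) (Fin r) ℂ))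
    (v : Fin 2) : Pmat f v ≠ 0 := by
  intro h
  have h0 := Pmat_coeff f v 0
  rw [h, coeff_zero] at h0
  have : rowPoly (chp f) 0 = 0 := by
    apply iota_inj v
    show Polynomial.eval₂ _ _ _ = Polynomial.eval₂ _ _ (0 : Polynomial ℂ)
    rw [← h0, Polynomial.eval₂_zero]
  exact rowPoly_chp_zero_ne hr f this

private lemma rowPoly_lead_ne {r : ℕ} (hr : 1 ≤ r) (f : Polynomial (Matrix (Fin r) (Fin r) ℂ))
    (v : Fin 2) : rowPoly (chp f) ((Pmat f v).natDegree) ≠ 0 := by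
  intro h0
  apply Pmat_ne_zero hr f v
  rw [← Polynomial.leadingCoeff_eq_zero, Polynomial.leadingCoeff, Pmat_coeff f v, h0]
  simp

private lemma pmap_coeff {r : ℕ} (f : Polynomial (Matrix (Fin r) (Fin r) ℂ)) (v : Fin 2)
    (α β : LL) (k : ℕ) : ((Pmat f v).map (psiab α β)).coeff k =
      Polynomial.aeval (![α, β] v) (rowPoly (chp f) k) := by
  rw [Pmat_map, theta_coeff]
  rfl

private lemma pmap_ne_zero {r : ℕ} (hr : 1 ≤ r) (f : Polynomial (Matrix (Fin r) (Fin r) ℂ))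
    (v : Fin 2) (α β : LL) (htr : Transcendental ℂ (![α, β] v)) :
    (Pmat f v).map (psiab α β) ≠ 0 := by
  intro h
  have h0 := pmap_coeff f v α β 0
  rw [h, coeff_zero] at h0
  exact htr ⟨rowPoly (chp f) 0, rowPoly_chp_zero_ne hr f, h0.symm⟩

private lemma pmap_degree {r : ℕ} (hr : 1 ≤ r) (f : Polynomial (Matrix (Fin r) (Fin r) ℂ))
    (v : Fin 2) (α β : LL) (htr : Transcendental ℂ (![α, β] v)) :
    ((Pmat f v).map (psiab α β)).degree = ((Pmat f v).natDegree : WithBot ℕ) := by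
  set m := (Pmat f v).natDegree with hm
  have hcoeff : ((Pmat f v).map (psiab α β)).coeff m ≠ 0 := by
    rw [pmap_coeff]
    intro h0
    exact htr ⟨rowPoly (chp f) m, rowPoly_lead_ne hr f v, h0⟩
  have hle : ((Pmat f v).map (psiab α β)).natDegree ≤ m := natDegree_map_le
  have hge : m ≤ ((Pmat f v).map (psiab α β)).natDegree := le_natDegree_of_ne_zero hcoeff
  have hne : (Pmat f v).map (psiab α β) ≠ 0 := fun h => hcoeff (by rw [h, coeff_zero])
  rw [degree_eq_natDegree hne]
  exact_mod_cast le_antisymm hle hge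

/-- the two common-root statements coming from a vanishing resultant -/
private lemma workhorse {r : ℕ} (hr : 1 ≤ r) (f g : Polynomial (Matrix (Fin r) (Fin r) ℂ))
    (α β : LL) (hR : (psiab α β) (Rres f g) = 0)
    (horient : (Transcendental ℂ β ∧ (Pmat f 0).map (psiab α β) ≠ 0) ∨
               (Transcendental ℂ α ∧ (Pmat g 1).map (psiab α β) ≠ 0)) :
    ∃ x₀ : LL, ((chp f).map (phix x₀)).eval α = 0 ∧ ((chp g).map (phix x₀)).eval β = 0 := by
  have hdet : ((_root_.sylvester (Pmat f 0) (Pmat g 1)).map (psiab α β)).det = 0 := by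
    rw [Rres, _root_.resultant, RingHom.map_det, RingHom.mapMatrix_apply] at hR
    exact hR
  obtain ⟨A, B, hnz, hA, hB, hABe⟩ := key1 (psiab α β) (Pmat f 0) (Pmat g 1) hdet
  have main : ∃ x₀ : LL, ((Pmat f 0).map (psiab α β)).eval x₀ = 0 ∧
      ((Pmat g 1).map (psiab α β)).eval x₀ = 0 := by
    rcases horient with ⟨hβ, hp0⟩ | ⟨hα, hq0⟩
    · have hβ' : Transcendental ℂ (![α, β] 1) := by simpa using hβ
      have hqdeg := pmap_degree hr g 1 α β hβ'
      exact key2 hABe (by rwa [hqdeg]) hnz hp0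
    · have hα' : Transcendental ℂ (![α, β] 0) := by simpa using hα
      have hpdeg := pmap_degree hr f 0 α β hα'
      obtain ⟨x₀, h1, h2⟩ := key2 (by rw [add_comm] at hABe; exact hABe)
        (by rwa [hpdeg]) (Or.symm hnz) hq0
      exact ⟨x₀, h2, h1⟩
  obtain ⟨x₀, h1, h2⟩ := main
  refine ⟨x₀, ?_, ?_⟩
  · rw [Pmat_map] at h1
    rw [theta_eval] at h1
    simpa [phix] using h1
  · rw [Pmat_map] at h2
    rw [theta_eval] at h2
    simpa [phix] using h2

private lemma x0_transcendental (χ : Polynomial (Polynomial ℂ)) (hχ : χ.Monic) (x₀ t : LL)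
    (ht : Transcendental ℂ t) (h0 : ((χ.map (phix x₀))).eval t = 0) :
    Transcendental ℂ x₀ := by
  by_contra hx
  rw [Transcendental, not_not] at hx
  set S := integralClosure ℂ LL with hS
  have hx₀S : x₀ ∈ S := hx.isIntegral
  have hcoeff : ∀ s, (χ.map (phix x₀)).coeff s ∈ S := by
    intro s
    rw [coeff_map]
    have heq : phix x₀ (χ.coeff s) = Polynomial.aeval x₀ (χ.coeff s) := rfl
    rw [heq]
    have hmem : Polynomial.aeval x₀ (χ.coeff s) ∈ Algebra.adjoin ℂ ({x₀} : Set LL) := by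
      rw [Algebra.adjoin_singleton_eq_range_aeval]
      exact ⟨χ.coeff s, rfl⟩
    exact (Algebra.adjoin_le (Set.singleton_subset_iff.mpr hx₀S)) hmem
  have hint : IsIntegral S t :=
    isIntegral_of_monic_coeff_mem S _ (hχ.map _) hcoeff h0
  have : IsIntegral ℂ t := isIntegral_trans t hint
  exact ht this.isAlgebraic

private lemma build_phi (x₀ : LL) (hx : Transcendental ℂ x₀) :
    ∃ Φ : LL →+* LL, Function.Injective Φ ∧
      (∀ pp : Polynomial ℂ, Φ (toClosure pp) = phix x₀ pp) ∧
      (∀ c : ℂ, Φ (algebraMap ℂ LL c) = algebraMap ℂ LL c) := by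
  have hinj : Function.Injective (phix x₀) := by
    rw [injective_iff_map_eq_zero]
    intro p hp
    by_contra hp0
    exact hx ⟨p, hp0, hp⟩
  let φ₀ : RatFunc ℂ →+* LL := IsFractionRing.lift (g := phix x₀) hinj
  let iS : Algebra (RatFunc ℂ) LL := inferInstance
  have hno1 : @Module.IsTorsionFree (RatFunc ℂ) LL _ _ iS.toModule := by
    letI := iS.toModule; exact inferInstance
  have iAlg : @Algebra.IsAlgebraic (RatFunc ℂ) LL _ _ iS := inferInstance
  letI iM : Algebra (RatFunc ℂ) LL := φ₀.toAlgebra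
  have hno2 : @Module.IsTorsionFree (RatFunc ℂ) LL _ _ iM.toModule := by
    letI := iM.toModule; exact inferInstance
  let Φa := @IsAlgClosed.lift LL _ _ (RatFunc ℂ) _ _ LL _ _ iS iM hno1 hno2 iAlg
  have hcom := @AlgHom.commutes (RatFunc ℂ) LL LL _ _ _ iS iM Φa
  have hmain : ∀ pp : Polynomial ℂ, Φa (toClosure pp) = phix x₀ pp := by
    intro pp
    have h1 : toClosure pp =
        @algebraMap (RatFunc ℂ) LL _ _ iS (algebraMap (Polynomial ℂ) (RatFunc ℂ) pp) := rfl
    rw [h1]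
    exact (hcom _).trans (IsFractionRing.lift_algebraMap hinj _)
  refine ⟨@AlgHom.toRingHom (RatFunc ℂ) LL LL _ _ _ iS iM Φa, RingHom.injective _,
    fun pp => hmain pp, ?_⟩
  intro c
  rw [cmap_eq c]
  show Φa (toClosure (Polynomial.C c)) = toClosure (Polynomial.C c)
  rw [hmain]
  show Polynomial.eval₂ (algebraMap ℂ LL) x₀ (Polynomial.C c) = toClosure (Polynomial.C c)
  rw [Polynomial.eval₂_C, cmap_eq c]

private lemma transfer {r : ℕ} (f : Polynomial (Matrix (Fin r) (Fin r) ℂ))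
    (Φ : LL →+* LL) (x₀ : LL) (hΦ : ∀ pp : Polynomial ℂ, Φ (toClosure pp) = phix x₀ pp)
    {z : LL} (hz : ((chp f).map (phix x₀)).eval z = 0) :
    ∃ w, ((chp f).map toClosure).eval w = 0 ∧ Φ w = z := by
  have hcomp : Φ.comp toClosure = phix x₀ := RingHom.ext hΦ
  have hmm : (chp f).map (phix x₀) = ((chp f).map toClosure).map Φ := by
    rw [Polynomial.map_map, hcomp]
  rw [hmm] at hz
  exact root_transport Φ ((chp f).map toClosure)
    (((chp_monic f).map toClosure).ne_zero) hz

private lemma eig_iff {r : ℕ} (f : Polynomial (Matrix (Fin r) (Fin r) ℂ)) (μ : LL) :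
    (μ • (1 : Matrix (Fin r) (Fin r) LL) - (matPolyEquiv.symm f).map toClosure).det = 0 ↔
      ((chp f).map toClosure).eval μ = 0 := by
  rw [det_smul_one_sub, Matrix.charpoly_map, chp]

private lemma exists_eig {r : ℕ} (hr : 1 ≤ r) (f : Polynomial (Matrix (Fin r) (Fin r) ℂ)) :
    ∃ μ : LL, ((chp f).map toClosure).eval μ = 0 := by
  have hne : ((chp f).map toClosure) ≠ 0 := ((chp_monic f).map toClosure).ne_zero
  have hdeg : ((chp f).map toClosure).degree ≠ 0 := by
    rw [degree_eq_natDegree hne]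
    have : ((chp f).map toClosure).natDegree = r := by
      rw [(chp_monic f).natDegree_map, chp_natDegree]
    rw [this]
    exact_mod_cast (by omega : (r : ℕ) ≠ 0)
  obtain ⟨μ, hμ⟩ := IsAlgClosed.exists_root _ hdeg
  exact ⟨μ, hμ⟩

private lemma direct_eig {r : ℕ} (f : Polynomial (Matrix (Fin r) (Fin r) ℂ)) (v : Fin 2)
    (α β : LL) (h : (Pmat f v).map (psiab α β) = 0) :
    ((chp f).map toClosure).eval (![α, β] v) = 0 := by
  have h1 : theta (algebraMap ℂ LL) (![α, β] v) (chp f) = 0 := by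
    rw [← Pmat_map]
    exact h
  have h2 := congrArg (Polynomial.eval (toClosure Polynomial.X)) h1
  rw [theta_eval] at h2
  have hh : Polynomial.eval₂RingHom (algebraMap ℂ LL) (toClosure Polynomial.X) = toClosure :=
    phix_tval
  rw [hh] at h2
  simpa using h2

private lemma master {r : ℕ} (hr : 1 ≤ r) (f g : Polynomial (Matrix (Fin r) (Fin r) ℂ))
    (α β : LL) (hR : (psiab α β) (Rres f g) = 0)
    (horient : (Transcendental ℂ β ∧ (Pmat f 0).map (psiab α β) ≠ 0) ∨
               (Transcendental ℂ α ∧ (Pmat g 1).map (psiab α β) ≠ 0)) :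
    ∃ (μ η : LL) (Φ : LL →+* LL), Function.Injective Φ ∧
      (∀ c : ℂ, Φ (algebraMap ℂ LL c) = algebraMap ℂ LL c) ∧
      Φ μ = α ∧ Φ η = β ∧
      ((chp f).map toClosure).eval μ = 0 ∧ ((chp g).map toClosure).eval η = 0 := by
  obtain ⟨x₀, h1, h2⟩ := workhorse hr f g α β hR horient
  have hx₀ : Transcendental ℂ x₀ := by
    rcases horient with ⟨hβ, _⟩ | ⟨hα, _⟩
    · exact x0_transcendental (chp g) (chp_monic g) x₀ β hβ h2
    · exact x0_transcendental (chp f) (chp_monic f) x₀ α hα h1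
  obtain ⟨Φ, hinj, hΦ, hfix⟩ := build_phi x₀ hx₀
  obtain ⟨μ, hμ, hΦμ⟩ := transfer f Φ x₀ hΦ h1
  obtain ⟨η, hη, hΦη⟩ := transfer g Φ x₀ hΦ h2
  exact ⟨μ, η, Φ, hinj, hfix, hΦμ, hΦη, hμ, hη⟩

private lemma psiab_X0 (α β : LL) : psiab α β (MvPolynomial.X 0) = α := by simp [psiab]

private lemma psiab_X1 (α β : LL) : psiab α β (MvPolynomial.X 1) = β := by simp [psiab]

private lemma psiab_C (α β : LL) (c : ℂ) : psiab α β (MvPolynomial.C c) = algebraMap ℂ LL c := by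
  simp [psiab]

private lemma pairne1 {a : ℕ} (b : ℤ) (ha : a ≠ 0) : (((a : ℤ), b) : ℤ × ℤ) ≠ (0, 0) := by
  intro h
  rw [Prod.mk.injEq] at h
  exact ha (by exact_mod_cast h.1)

private lemma pairne2 {b : ℕ} (a : ℤ) (hb : b ≠ 0) : ((a, (b : ℤ)) : ℤ × ℤ) ≠ (0, 0) := by
  intro h
  rw [Prod.mk.injEq] at h
  exact hb (by exact_mod_cast h.2)

set_option maxHeartbeats 1600000 in
theorem statement5 (r : ℕ) (hr : 1 ≤ r)
    (f g : Polynomial (Matrix (Fin r) (Fin r) ℂ))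
    (hf : 1 ≤ f.natDegree) (hg : 1 ≤ g.natDegree)
    (hindep : ∀ μ η : AlgebraicClosure (RatFunc ℂ),
      (μ • (1 : Matrix (Fin r) (Fin r) (AlgebraicClosure (RatFunc ℂ))) -
          (matPolyEquiv.symm f).map toClosure).det = 0 →
      (η • (1 : Matrix (Fin r) (Fin r) (AlgebraicClosure (RatFunc ℂ))) -
          (matPolyEquiv.symm g).map toClosure).det = 0 →
      ∀ k l : ℤ, (k, l) ≠ (0, 0) → μ ^ k * η ^ l ≠ 1) :
    ∀ i j : ℕ, ¬(i = 0 ∧ j = 0) → ∀ ρ : ℂ, (∃ k : ℕ, 1 ≤ k ∧ ρ ^ k = 1) →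
      ¬((MvPolynomial.X 0 : MvPolynomial (Fin 2) ℂ) ^ i * MvPolynomial.X 1 ^ j -
          MvPolynomial.C ρ ∣ Rres f g) ∧
      ¬((MvPolynomial.X 0 : MvPolynomial (Fin 2) ℂ) ^ i -
          MvPolynomial.C ρ * MvPolynomial.X 1 ^ j ∣ Rres f g) := by
  intro i j hij ρ hρ
  obtain ⟨k₀, hk₀, hρk⟩ := hρ
  have hρ0 : ρ ≠ 0 := by
    intro h
    rw [h, zero_pow (by omega : k₀ ≠ 0)] at hρk
    exact zero_ne_one hρk
  set t : LL := toClosure Polynomial.X with ht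
  have httr : Transcendental ℂ t := transcendental_tval
  have ht0 : t ≠ 0 := tval_ne_zero
  set am : ℂ →+* LL := algebraMap ℂ LL with ham
  have ham0 : ∀ c : ℂ, c ≠ 0 → am c ≠ 0 := by
    intro c hc h
    exact hc ((algebraMap ℂ LL).injective (by rw [h, _root_.map_zero]))
  have hindep' : ∀ μ η : LL, ((chp f).map toClosure).eval μ = 0 →
      ((chp g).map toClosure).eval η = 0 →
      ∀ k l : ℤ, (k, l) ≠ (0, 0) → μ ^ k * η ^ l ≠ 1 := by
    intro μ η h1 h2
    exact hindep μ η ((eig_iff f μ).mpr h1) ((eig_iff g η).mpr h2)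
  constructor
  · -- Form 1 : X0^i * X1^j - C ρ
    intro hdvd
    obtain ⟨cc, hcc⟩ := hdvd
    rcases Nat.eq_zero_or_pos j with hj | hj
    · -- j = 0
      have hi : 0 < i := by
        rcases Nat.eq_zero_or_pos i with h | h
        · exact absurd ⟨h, hj⟩ hij
        · exact h
      obtain ⟨a, ha⟩ := IsAlgClosed.exists_pow_nat_eq (k := ℂ) ρ hi
      set α : LL := am a with hα
      have hψF : psiab α t ((MvPolynomial.X 0 : MvPolynomial (Fin 2) ℂ) ^ i *
          MvPolynomial.X 1 ^ j - MvPolynomial.C ρ) = 0 := by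
        rw [_root_.map_sub, _root_.map_mul, _root_.map_pow, _root_.map_pow, psiab_X0, psiab_X1, psiab_C, hj, pow_zero,
          mul_one, hα, ← _root_.map_pow, ha, sub_self]
      have hR : psiab α t (Rres f g) = 0 := by
        rw [hcc, _root_.map_mul, hψF, zero_mul]
      by_cases hp0 : (Pmat f 0).map (psiab α t) = 0
      · have heig : ((chp f).map toClosure).eval α = 0 := by
          have := direct_eig f 0 α t hp0
          simpa using this
        obtain ⟨η, hη⟩ := exists_eig hr g
        refine hindep' α η heig hη (i * k₀ : ℕ) 0 (pairne1 0 (by positivity)) ?_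
        rw [zpow_natCast, zpow_zero, mul_one, hα, ← _root_.map_pow, pow_mul, ha, hρk, _root_.map_one]
      · obtain ⟨μ, η, Φ, hinjΦ, hfix, hΦμ, hΦη, hμ, hη⟩ :=
          master hr f g α t hR (Or.inl ⟨httr, hp0⟩)
        have hone : μ ^ (i * k₀) = 1 := by
          apply hinjΦ
          rw [_root_.map_pow, hΦμ, _root_.map_one, hα, ← _root_.map_pow, pow_mul, ha, hρk, _root_.map_one]
        refine hindep' μ η hμ hη (i * k₀ : ℕ) 0 (pairne1 0 (by positivity)) ?_
        rw [zpow_natCast, zpow_zero, mul_one, hone]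
    · rcases Nat.eq_zero_or_pos i with hi | hi
      · -- i = 0, j ≥ 1
        obtain ⟨b, hb⟩ := IsAlgClosed.exists_pow_nat_eq (k := ℂ) ρ hj
        set β : LL := am b with hβ
        have hψF : psiab t β ((MvPolynomial.X 0 : MvPolynomial (Fin 2) ℂ) ^ i *
            MvPolynomial.X 1 ^ j - MvPolynomial.C ρ) = 0 := by
          rw [_root_.map_sub, _root_.map_mul, _root_.map_pow, _root_.map_pow, psiab_X0, psiab_X1, psiab_C, hi, pow_zero,
            one_mul, hβ, ← _root_.map_pow, hb, sub_self]
        have hR : psiab t β (Rres f g) = 0 := by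
          rw [hcc, _root_.map_mul, hψF, zero_mul]
        by_cases hq0 : (Pmat g 1).map (psiab t β) = 0
        · have heig : ((chp g).map toClosure).eval β = 0 := by
            have := direct_eig g 1 t β hq0
            simpa using this
          obtain ⟨μ, hμ⟩ := exists_eig hr f
          refine hindep' μ β hμ heig 0 (j * k₀ : ℕ) (pairne2 0 (by positivity)) ?_
          rw [zpow_natCast, zpow_zero, one_mul, hβ, ← _root_.map_pow, pow_mul, hb, hρk, _root_.map_one]
        · obtain ⟨μ, η, Φ, hinjΦ, hfix, hΦμ, hΦη, hμ, hη⟩ :=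
            master hr f g t β hR (Or.inr ⟨httr, hq0⟩)
          have hone : η ^ (j * k₀) = 1 := by
            apply hinjΦ
            rw [_root_.map_pow, hΦη, _root_.map_one, hβ, ← _root_.map_pow, pow_mul, hb, hρk, _root_.map_one]
          refine hindep' μ η hμ hη 0 (j * k₀ : ℕ) (pairne2 0 (by positivity)) ?_
          rw [zpow_natCast, zpow_zero, one_mul, hone]
      · -- i, j ≥ 1
        have hti : t ^ i ≠ 0 := pow_ne_zero _ ht0
        obtain ⟨β, hβj⟩ := IsAlgClosed.exists_pow_nat_eq (k := LL) (am ρ * (t ^ i)⁻¹) hj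
        have hψF : psiab t β ((MvPolynomial.X 0 : MvPolynomial (Fin 2) ℂ) ^ i *
            MvPolynomial.X 1 ^ j - MvPolynomial.C ρ) = 0 := by
          rw [_root_.map_sub, _root_.map_mul, _root_.map_pow, _root_.map_pow, psiab_X0, psiab_X1, psiab_C, hβj,
            mul_comm (am ρ) ((t ^ i)⁻¹), ← mul_assoc, mul_inv_cancel₀ hti, one_mul, sub_self]
        have hR : psiab t β (Rres f g) = 0 := by
          rw [hcc, _root_.map_mul, hψF, zero_mul]
        have hβtr : Transcendental ℂ β := by
          intro hβa
          apply httr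
          have h1 : IsIntegral ℂ (β ^ j) := (isAlgebraic_iff_isIntegral.mp hβa).pow j
          have hbj0 : β ^ j ≠ 0 := by
            rw [hβj]
            exact mul_ne_zero (ham0 ρ hρ0) (inv_ne_zero hti)
          have h2 : IsIntegral ℂ ((β ^ j)⁻¹) := h1.inv
          have h3 : t ^ i = am ρ * (β ^ j)⁻¹ := by
            rw [hβj, mul_inv, inv_inv, ← mul_assoc, mul_inv_cancel₀ (ham0 ρ hρ0), one_mul]
          have h4 : IsIntegral ℂ (t ^ i) := by
            rw [h3]
            exact (isIntegral_algebraMap).mul h2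
          exact (IsIntegral.of_pow hi h4).isAlgebraic
        have hp0 : (Pmat f 0).map (psiab t β) ≠ 0 :=
          pmap_ne_zero hr f 0 t β (by simpa using httr)
        obtain ⟨μ, η, Φ, hinjΦ, hfix, hΦμ, hΦη, hμ, hη⟩ :=
          master hr f g t β hR (Or.inl ⟨hβtr, hp0⟩)
        have hrel : μ ^ i * η ^ j = am ρ := by
          apply hinjΦ
          rw [_root_.map_mul, _root_.map_pow, _root_.map_pow, hΦμ, hΦη, hfix, hβj,
            mul_comm (am ρ) ((t ^ i)⁻¹), ← mul_assoc, mul_inv_cancel₀ hti, one_mul]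
        have hone : μ ^ (i * k₀) * η ^ (j * k₀) = 1 := by
          rw [pow_mul, pow_mul, ← mul_pow, hrel, ← _root_.map_pow, hρk, _root_.map_one]
        refine hindep' μ η hμ hη (i * k₀ : ℕ) (j * k₀ : ℕ)
          (pairne1 _ (by positivity)) ?_
        rw [zpow_natCast, zpow_natCast, hone]
  · -- Form 2 : X0^i - C ρ * X1^j
    intro hdvd
    obtain ⟨cc, hcc⟩ := hdvd
    rcases Nat.eq_zero_or_pos j with hj | hj
    · -- j = 0
      have hi : 0 < i := by
        rcases Nat.eq_zero_or_pos i with h | h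
        · exact absurd ⟨h, hj⟩ hij
        · exact h
      obtain ⟨a, ha⟩ := IsAlgClosed.exists_pow_nat_eq (k := ℂ) ρ hi
      set α : LL := am a with hα
      have hψF : psiab α t ((MvPolynomial.X 0 : MvPolynomial (Fin 2) ℂ) ^ i -
          MvPolynomial.C ρ * MvPolynomial.X 1 ^ j) = 0 := by
        rw [_root_.map_sub, _root_.map_mul, _root_.map_pow, _root_.map_pow, psiab_X0, psiab_X1, psiab_C, hj, pow_zero,
          mul_one, hα, ← _root_.map_pow, ha, sub_self]
      have hR : psiab α t (Rres f g) = 0 := by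
        rw [hcc, _root_.map_mul, hψF, zero_mul]
      by_cases hp0 : (Pmat f 0).map (psiab α t) = 0
      · have heig : ((chp f).map toClosure).eval α = 0 := by
          have := direct_eig f 0 α t hp0
          simpa using this
        obtain ⟨η, hη⟩ := exists_eig hr g
        refine hindep' α η heig hη (i * k₀ : ℕ) 0 (pairne1 0 (by positivity)) ?_
        rw [zpow_natCast, zpow_zero, mul_one, hα, ← _root_.map_pow, pow_mul, ha, hρk, _root_.map_one]
      · obtain ⟨μ, η, Φ, hinjΦ, hfix, hΦμ, hΦη, hμ, hη⟩ :=
          master hr f g α t hR (Or.inl ⟨httr, hp0⟩)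
        have hone : μ ^ (i * k₀) = 1 := by
          apply hinjΦ
          rw [_root_.map_pow, hΦμ, _root_.map_one, hα, ← _root_.map_pow, pow_mul, ha, hρk, _root_.map_one]
        refine hindep' μ η hμ hη (i * k₀ : ℕ) 0 (pairne1 0 (by positivity)) ?_
        rw [zpow_natCast, zpow_zero, mul_one, hone]
    · rcases Nat.eq_zero_or_pos i with hi | hi
      · -- i = 0, j ≥ 1
        obtain ⟨b, hb⟩ := IsAlgClosed.exists_pow_nat_eq (k := ℂ) ρ⁻¹ hj
        set β : LL := am b with hβ
        have hψF : psiab t β ((MvPolynomial.X 0 : MvPolynomial (Fin 2) ℂ) ^ i -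
            MvPolynomial.C ρ * MvPolynomial.X 1 ^ j) = 0 := by
          rw [_root_.map_sub, _root_.map_mul, _root_.map_pow, _root_.map_pow, psiab_X0, psiab_X1, psiab_C, hi, pow_zero,
            hβ, ← _root_.map_pow, hb, ← _root_.map_mul, mul_inv_cancel₀ hρ0, _root_.map_one, sub_self]
        have hR : psiab t β (Rres f g) = 0 := by
          rw [hcc, _root_.map_mul, hψF, zero_mul]
        have hbjk : b ^ (j * k₀) = 1 := by
          rw [pow_mul, hb, inv_pow, hρk, inv_one]
        by_cases hq0 : (Pmat g 1).map (psiab t β) = 0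
        · have heig : ((chp g).map toClosure).eval β = 0 := by
            have := direct_eig g 1 t β hq0
            simpa using this
          obtain ⟨μ, hμ⟩ := exists_eig hr f
          refine hindep' μ β hμ heig 0 (j * k₀ : ℕ) (pairne2 0 (by positivity)) ?_
          rw [zpow_natCast, zpow_zero, one_mul, hβ, ← _root_.map_pow, hbjk, _root_.map_one]
        · obtain ⟨μ, η, Φ, hinjΦ, hfix, hΦμ, hΦη, hμ, hη⟩ :=
            master hr f g t β hR (Or.inr ⟨httr, hq0⟩)
          have hone : η ^ (j * k₀) = 1 := by
            apply hinjΦ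
            rw [_root_.map_pow, hΦη, _root_.map_one, hβ, ← _root_.map_pow, hbjk, _root_.map_one]
          refine hindep' μ η hμ hη 0 (j * k₀ : ℕ) (pairne2 0 (by positivity)) ?_
          rw [zpow_natCast, zpow_zero, one_mul, hone]
      · -- i, j ≥ 1
        have hamρ : am ρ ≠ 0 := ham0 ρ hρ0
        obtain ⟨β, hβj⟩ := IsAlgClosed.exists_pow_nat_eq (k := LL) ((am ρ)⁻¹ * t ^ i) hj
        have hψF : psiab t β ((MvPolynomial.X 0 : MvPolynomial (Fin 2) ℂ) ^ i -
            MvPolynomial.C ρ * MvPolynomial.X 1 ^ j) = 0 := by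
          rw [_root_.map_sub, _root_.map_mul, _root_.map_pow, _root_.map_pow, psiab_X0, psiab_X1, psiab_C, hβj,
            ← mul_assoc, mul_inv_cancel₀ (ham0 ρ hρ0), one_mul, sub_self]
        have hR : psiab t β (Rres f g) = 0 := by
          rw [hcc, _root_.map_mul, hψF, zero_mul]
        have hβtr : Transcendental ℂ β := by
          intro hβa
          apply httr
          have h1 : IsIntegral ℂ (β ^ j) := (isAlgebraic_iff_isIntegral.mp hβa).pow j
          have h3 : t ^ i = am ρ * β ^ j := by
            rw [hβj, ← mul_assoc, mul_inv_cancel₀ (ham0 ρ hρ0), one_mul]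
          have h4 : IsIntegral ℂ (t ^ i) := by
            rw [h3]
            exact (isIntegral_algebraMap).mul h1
          exact (IsIntegral.of_pow hi h4).isAlgebraic
        have hβ0 : β ≠ 0 := by
          intro h
          have : β ^ j ≠ 0 := by
            rw [hβj]
            exact mul_ne_zero (inv_ne_zero hamρ) (pow_ne_zero _ ht0)
          exact this (by rw [h, zero_pow (by omega : j ≠ 0)])
        have hp0 : (Pmat f 0).map (psiab t β) ≠ 0 :=
          pmap_ne_zero hr f 0 t β (by simpa using httr)
        obtain ⟨μ, η, Φ, hinjΦ, hfix, hΦμ, hΦη, hμ, hη⟩ :=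
          master hr f g t β hR (Or.inl ⟨hβtr, hp0⟩)
        have hη0 : η ≠ 0 := by
          intro h
          rw [h, _root_.map_zero] at hΦη
          exact hβ0 hΦη.symm
        have hrel : μ ^ i = am ρ * η ^ j := by
          apply hinjΦ
          rw [_root_.map_mul, _root_.map_pow, _root_.map_pow, hΦμ, hΦη, hfix, hβj,
            ← mul_assoc, mul_inv_cancel₀ (ham0 ρ hρ0), one_mul]
        have hone : μ ^ (i * k₀) = η ^ (j * k₀) := by
          rw [pow_mul, pow_mul, hrel, mul_pow, ← _root_.map_pow, hρk, _root_.map_one, one_mul]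
        refine hindep' μ η hμ hη (i * k₀ : ℕ) (-(j * k₀ : ℕ) : ℤ)
          (pairne1 _ (by positivity)) ?_
        rw [zpow_natCast, _root_.zpow_neg, zpow_natCast, hone]
        exact mul_inv_cancel₀ (pow_ne_zero _ hη0)
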